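/- Let $k \ge 1$, $m \ge 1$ be integers and let $Q \subset \mathbb{Z}^k$ be the set of integer points in $[0,m]^k$. Let $A = (A_{ij})$ be the $|Q| \times |Q|$ matrix indexed by points $X^i \in Q$ with $A_{ii} = 0$ and $A_{ij} = |X^i - X^j|^{-(n-2)}$ for $i \neq j$, where $n-2 > 2k$. Suppose $c > 0$ and $p > 2$ and $\bar{b} = (\bar{b}_1, \ldots, \bar{b}_{|Q|})$ is a vector with positive entries satisfying $\sum_{j \neq i} A_{ij}\bar{b}_j = c\, \bar{b}_i^{p-1}$ for all $i$. Then there exist constants $0 < C_5 < C_6 < \infty$ depending only on $n$, $k$, $c$, $p$ (in particular independent of $m$) such that $C_5 \le \bar{b}_i \le C_6$ for all $i$. -/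

import Mathlib

open Real Finset

/-- The lattice point of `ℝ^k` associated to `q : Fin k → Fin (m+1)`. -/
noncomputable def latPt {k m : ℕ} (q : Fin k → Fin (m + 1)) : EuclideanSpace ℝ (Fin k) :=
  WithLp.toLp 2 (fun i => ((q i : ℕ) : ℝ))


lemma gsum_aux : ∀ N : ℕ, 1 ≤ N → ∑ t ∈ Finset.range N, 1 / (1 + (t:ℝ))^2 ≤ 2 - 1/(N:ℝ) := by
  intro N
  induction N with
  | zero => omega
  | succ N ih =>
    intro _
    rcases Nat.eq_zero_or_pos N with h0 | h1
    · subst h0; norm_num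
    · rw [Finset.sum_range_succ]
      have h2 := ih h1
      have hN0 : (0:ℝ) < N := by exact_mod_cast h1
      have step : 1/(1+(N:ℝ))^2 ≤ 1/(N:ℝ) - 1/((N:ℝ)+1) := by
        have he : 1/(N:ℝ) - 1/((N:ℝ)+1) = 1/((N:ℝ)*((N:ℝ)+1)) := by
          field_simp
          ring
        rw [he]
        apply one_div_le_one_div_of_le (by positivity)
        nlinarith
      push_cast
      linarith

lemma gsum (N : ℕ) : ∑ t ∈ Finset.range N, 1 / (1 + (t:ℝ))^2 ≤ 2 := by
  rcases Nat.eq_zero_or_pos N with h0 | h1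
  · subst h0; norm_num
  · have hN : (0:ℝ) < N := by exact_mod_cast h1
    have h2 : 1/(N:ℝ) > 0 := by positivity
    linarith [gsum_aux N h1]

lemma coord_sum (m a : ℕ) :
    ∑ j ∈ Finset.range (m+1), 1/(1 + |(a:ℝ) - (j:ℝ)|)^2 ≤ 4 := by
  rw [← Finset.sum_filter_add_sum_filter_not (Finset.range (m+1)) (fun j => j ≤ a)]
  have hg : ∀ t : ℕ, 0 ≤ 1/(1 + (t:ℝ))^2 := fun t => by positivity
  have h1 : ∑ j ∈ (Finset.range (m+1)).filter (fun j => j ≤ a),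
      1/(1 + |(a:ℝ) - (j:ℝ)|)^2 ≤ 2 := by
    have e1 : ∑ j ∈ (Finset.range (m+1)).filter (fun j => j ≤ a),
        1/(1 + |(a:ℝ) - (j:ℝ)|)^2
        = ∑ j ∈ (Finset.range (m+1)).filter (fun j => j ≤ a), 1/(1 + ((a - j : ℕ):ℝ))^2 := by
      refine Finset.sum_congr rfl fun j hj => ?_
      have hja : j ≤ a := (Finset.mem_filter.mp hj).2
      rw [Nat.cast_sub hja, abs_of_nonneg (by
        have : (j:ℝ) ≤ (a:ℝ) := by exact_mod_cast hja
        linarith)]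
    have e2 : ∑ t ∈ ((Finset.range (m+1)).filter (fun j => j ≤ a)).image (fun j => a - j),
        1/(1 + (t:ℝ))^2
        = ∑ j ∈ (Finset.range (m+1)).filter (fun j => j ≤ a), 1/(1 + ((a - j : ℕ):ℝ))^2 := by
      apply Finset.sum_image
      intro j₁ h₁ j₂ h₂ h
      have := (Finset.mem_filter.mp h₁).2
      have := (Finset.mem_filter.mp h₂).2
      simp only [] at h
      omega
    rw [e1, ← e2]
    calc ∑ t ∈ ((Finset.range (m+1)).filter (fun j => j ≤ a)).image (fun j => a - j),
          1/(1 + (t:ℝ))^2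
        ≤ ∑ t ∈ Finset.range (a+1), 1/(1 + (t:ℝ))^2 := by
          apply Finset.sum_le_sum_of_subset_of_nonneg
          · intro t ht
            obtain ⟨j, hj, rfl⟩ := Finset.mem_image.mp ht
            exact Finset.mem_range.mpr (by omega)
          · intro t _ _; exact hg t
      _ ≤ 2 := gsum (a+1)
  have h2 : ∑ j ∈ (Finset.range (m+1)).filter (fun j => ¬ j ≤ a),
      1/(1 + |(a:ℝ) - (j:ℝ)|)^2 ≤ 2 := by
    have e1 : ∑ j ∈ (Finset.range (m+1)).filter (fun j => ¬ j ≤ a),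
        1/(1 + |(a:ℝ) - (j:ℝ)|)^2
        = ∑ j ∈ (Finset.range (m+1)).filter (fun j => ¬ j ≤ a), 1/(1 + ((j - a : ℕ):ℝ))^2 := by
      refine Finset.sum_congr rfl fun j hj => ?_
      have hja : a ≤ j := le_of_lt (not_le.mp (Finset.mem_filter.mp hj).2)
      rw [Nat.cast_sub hja, abs_sub_comm, abs_of_nonneg (by
        have : (a:ℝ) ≤ (j:ℝ) := by exact_mod_cast hja
        linarith)]
    have e2 : ∑ t ∈ ((Finset.range (m+1)).filter (fun j => ¬ j ≤ a)).image (fun j => j - a),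
        1/(1 + (t:ℝ))^2
        = ∑ j ∈ (Finset.range (m+1)).filter (fun j => ¬ j ≤ a), 1/(1 + ((j - a : ℕ):ℝ))^2 := by
      apply Finset.sum_image
      intro j₁ h₁ j₂ h₂ h
      have := (Finset.mem_filter.mp h₁).2
      have := (Finset.mem_filter.mp h₂).2
      simp only [] at h
      omega
    rw [e1, ← e2]
    calc ∑ t ∈ ((Finset.range (m+1)).filter (fun j => ¬ j ≤ a)).image (fun j => j - a),
          1/(1 + (t:ℝ))^2
        ≤ ∑ t ∈ Finset.range (m+1), 1/(1 + (t:ℝ))^2 := by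
          apply Finset.sum_le_sum_of_subset_of_nonneg
          · intro t ht
            obtain ⟨j, hj, rfl⟩ := Finset.mem_image.mp ht
            have := Finset.mem_range.mp (Finset.mem_filter.mp hj).1
            exact Finset.mem_range.mpr (by omega)
          · intro t _ _; exact hg t
      _ ≤ 2 := gsum (m+1)
  linarith

lemma nat_one_le_abs {a b : ℕ} (h : a ≠ b) : (1:ℝ) ≤ |(a:ℝ) - (b:ℝ)| := by
  rcases Nat.lt_or_ge a b with h1 | h1
  · rw [abs_sub_comm, abs_of_nonneg (by
      have : (a:ℝ) ≤ b := by exact_mod_cast h1.le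
      linarith)]
    have : (a:ℝ) + 1 ≤ b := by exact_mod_cast h1
    linarith
  · have h2 : b < a := lt_of_le_of_ne h1 (Ne.symm h)
    rw [abs_of_nonneg (by
      have : (b:ℝ) ≤ a := by exact_mod_cast h1
      linarith)]
    have : (b:ℝ) + 1 ≤ a := by exact_mod_cast h2
    linarith

lemma dist_latPt_sq {k m : ℕ} (q q' : Fin k → Fin (m+1)) :
    dist (latPt q) (latPt q') ^ 2 = ∑ i, (((q i : ℕ):ℝ) - ((q' i : ℕ):ℝ))^2 := by
  rw [EuclideanSpace.dist_eq, Real.sq_sqrt (by positivity)]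
  refine Finset.sum_congr rfl fun i _ => ?_
  rw [Real.dist_eq, sq_abs]
  rfl

lemma coord_le_dist {k m : ℕ} (q q' : Fin k → Fin (m+1)) (i : Fin k) :
    |((q i : ℕ):ℝ) - ((q' i : ℕ):ℝ)| ≤ dist (latPt q) (latPt q') := by
  have h := dist_latPt_sq q q'
  have h1 : (((q i : ℕ):ℝ) - ((q' i : ℕ):ℝ))^2 ≤ dist (latPt q) (latPt q') ^ 2 := by
    rw [h]
    exact Finset.single_le_sum (f := fun j => (((q j : ℕ):ℝ) - ((q' j : ℕ):ℝ))^2) (fun j _ => sq_nonneg _) (Finset.mem_univ i)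
  calc |((q i : ℕ):ℝ) - ((q' i : ℕ):ℝ)|
      = Real.sqrt ((((q i : ℕ):ℝ) - ((q' i : ℕ):ℝ))^2) := (Real.sqrt_sq_eq_abs _).symm
    _ ≤ Real.sqrt (dist (latPt q) (latPt q') ^ 2) := Real.sqrt_le_sqrt h1
    _ = dist (latPt q) (latPt q') := Real.sqrt_sq dist_nonneg

lemma one_le_dist {k m : ℕ} {q q' : Fin k → Fin (m+1)} (h : q' ≠ q) :
    1 ≤ dist (latPt q) (latPt q') := by
  obtain ⟨i, hi⟩ := Function.ne_iff.mp h
  have : (q i : ℕ) ≠ (q' i : ℕ) := fun hv => hi (Fin.val_injective hv).symm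
  exact le_trans (nat_one_le_abs this) (coord_le_dist q q' i)

lemma term_bound {n k m : ℕ} (hnk : 2*k+2 < n) (q q' : Fin k → Fin (m+1)) (hne : q' ≠ q) :
    1 / dist (latPt q) (latPt q') ^ ((n:ℝ) - 2)
      ≤ ∏ i, 4 / (1 + |((q i : ℕ):ℝ) - ((q' i : ℕ):ℝ)|)^2 := by
  set d := dist (latPt q) (latPt q') with hd
  have hd1 : 1 ≤ d := one_le_dist hne
  have h1 : d ^ ((2*k:ℕ):ℝ) ≤ d ^ ((n:ℝ)-2) := by
    apply Real.rpow_le_rpow_of_exponent_le hd1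
    have : ((2*k+2:ℕ):ℝ) < n := by exact_mod_cast hnk
    push_cast at this ⊢
    linarith
  rw [Real.rpow_natCast] at h1
  have h2 : ∏ i : Fin k, (1 + |((q i:ℕ):ℝ) - ((q' i:ℕ):ℝ)|)^2 / 4 ≤ d ^ (2*k) := by
    have e : d ^ (2*k) = ∏ _i : Fin k, d^2 := by
      rw [Finset.prod_const, Finset.card_univ, Fintype.card_fin, ← pow_mul]
    rw [e]
    apply Finset.prod_le_prod
    · intro i _; positivity
    · intro i _
      have h3 := coord_le_dist q q' i
      have hle : (1 + |((q i:ℕ):ℝ) - ((q' i:ℕ):ℝ)|)/2 ≤ d := by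
        rw [← hd] at h3; linarith
      calc (1 + |((q i:ℕ):ℝ) - ((q' i:ℕ):ℝ)|)^2/4
          = ((1 + |((q i:ℕ):ℝ) - ((q' i:ℕ):ℝ)|)/2)^2 := by ring
        _ ≤ d^2 := pow_le_pow_left₀ (by positivity) hle 2
  have hprodpos : 0 < ∏ i : Fin k, (1 + |((q i:ℕ):ℝ) - ((q' i:ℕ):ℝ)|)^2 / 4 :=
    Finset.prod_pos (fun i _ => by positivity)
  calc 1 / d ^ ((n:ℝ)-2)
      ≤ 1 / ∏ i : Fin k, (1 + |((q i:ℕ):ℝ) - ((q' i:ℕ):ℝ)|)^2 / 4 :=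
        one_div_le_one_div_of_le hprodpos (le_trans h2 h1)
    _ = ∏ i, 4 / (1 + |((q i : ℕ):ℝ) - ((q' i : ℕ):ℝ)|)^2 := by
        rw [one_div, ← Finset.prod_inv_distrib]
        exact Finset.prod_congr rfl fun i _ => by rw [inv_div]

lemma row_bound {n k m : ℕ} (hnk : 2*k+2 < n) (q : Fin k → Fin (m+1)) :
    ∑ q' ∈ Finset.univ.filter (fun q' => q' ≠ q),
      1 / dist (latPt q) (latPt q') ^ ((n:ℝ)-2) ≤ 16^k := by
  calc ∑ q' ∈ Finset.univ.filter (fun q' => q' ≠ q),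
        1 / dist (latPt q) (latPt q') ^ ((n:ℝ)-2)
      ≤ ∑ q' ∈ Finset.univ.filter (fun q' => q' ≠ q),
        ∏ i, 4 / (1 + |((q i : ℕ):ℝ) - ((q' i : ℕ):ℝ)|)^2 := by
        refine Finset.sum_le_sum fun q' hq' => ?_
        exact term_bound hnk q q' (Finset.mem_filter.mp hq').2
    _ ≤ ∑ q' : Fin k → Fin (m+1), ∏ i, 4 / (1 + |((q i : ℕ):ℝ) - ((q' i : ℕ):ℝ)|)^2 := by
        apply Finset.sum_le_sum_of_subset_of_nonneg (Finset.filter_subset _ _)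
        intro q' _ _
        exact Finset.prod_nonneg fun i _ => by positivity
    _ = ∏ i, ∑ j : Fin (m+1), 4 / (1 + |((q i : ℕ):ℝ) - ((j : ℕ):ℝ)|)^2 :=
        (Fintype.prod_sum (fun (i : Fin k) (j : Fin (m+1)) => 4 / (1 + |((q i : ℕ):ℝ) - ((j : ℕ):ℝ)|)^2)).symm
    _ ≤ ∏ _i : Fin k, (16:ℝ) := by
        apply Finset.prod_le_prod
        · intro i _
          exact Finset.sum_nonneg fun j _ => by positivity
        · intro i _
          have e : ∑ j : Fin (m+1), 4 / (1 + |((q i : ℕ):ℝ) - ((j : ℕ):ℝ)|)^2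
              = 4 * ∑ j ∈ Finset.range (m+1), 1 / (1 + |((q i : ℕ):ℝ) - (j:ℝ)|)^2 := by
            rw [Finset.mul_sum]
            rw [Fin.sum_univ_eq_sum_range (fun j => 4 / (1 + |((q i : ℕ):ℝ) - (j:ℝ)|)^2)]
            exact Finset.sum_congr rfl fun j _ => by ring
          rw [e]
          have := coord_sum m (q i : ℕ)
          linarith
    _ = 16^k := by rw [Finset.prod_const, Finset.card_univ, Fintype.card_fin]

theorem stmt_9 {n k : ℕ} (hk : 1 ≤ k) (hnk : 2 * k + 2 < n)
    (c p : ℝ) (hc : 0 < c) (hp : 2 < p) :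
    ∃ C₅ C₆ : ℝ, 0 < C₅ ∧ C₅ < C₆ ∧
      ∀ m : ℕ, 1 ≤ m → ∀ b : (Fin k → Fin (m + 1)) → ℝ,
        (∀ q, 0 < b q) →
        (∀ q, (∑ q' ∈ Finset.univ.filter (fun q' => q' ≠ q),
            (1 / dist (latPt q) (latPt q') ^ ((n : ℝ) - 2)) * b q') = c * b q ^ (p - 1)) →
        ∀ q, C₅ ≤ b q ∧ b q ≤ C₆ := by
  have hp2 : 0 < p - 2 := by linarith
  set e : ℝ := (p - 2)⁻¹ with he
  have he0 : 0 ≤ e := by positivity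
  set L : ℝ := (c⁻¹) ^ e with hL
  set U : ℝ := ((16:ℝ)^k / c) ^ e with hU
  have hLpos : 0 < L := Real.rpow_pos_of_pos (by positivity) _
  have hUpos : 0 < U := Real.rpow_pos_of_pos (by positivity) _
  have hLU : L ≤ U := by
    apply Real.rpow_le_rpow (by positivity) _ he0
    rw [div_eq_mul_inv]
    nlinarith [one_le_pow₀ (by norm_num : (1:ℝ) ≤ 16) (n := k), inv_pos.mpr hc]
  refine ⟨L/2, U+1, by positivity, by linarith, ?_⟩
  intro m hm b hb hsum q
  have hAnonneg : ∀ (q q' : Fin k → Fin (m+1)),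
      0 ≤ 1 / dist (latPt q) (latPt q') ^ ((n:ℝ)-2) :=
    fun q q' => div_nonneg zero_le_one (Real.rpow_nonneg dist_nonneg _)
  constructor
  · -- lower bound via min
    obtain ⟨q₁, -, hq₁⟩ := Finset.exists_min_image Finset.univ b ⟨q, Finset.mem_univ q⟩
    have hbq₁ := hb q₁
    -- neighbor
    have hi0 : 0 < k := hk
    set i0 : Fin k := ⟨0, hi0⟩ with hi0def
    set js : Fin (m+1) := if h : (q₁ i0 : ℕ) = 0 then ⟨1, by omega⟩
      else ⟨(q₁ i0 : ℕ) - 1, by have := (q₁ i0).isLt; omega⟩ with hjs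
    have hjsval : (((q₁ i0 : ℕ):ℝ) - ((js : ℕ):ℝ))^2 = 1 := by
      by_cases h : (q₁ i0 : ℕ) = 0
      · rw [hjs]; simp only [h, dif_pos]; norm_num
      · rw [hjs]; simp only [h, dif_neg, not_false_iff]
        have h1 : 1 ≤ (q₁ i0 : ℕ) := Nat.pos_of_ne_zero h
        rw [Nat.cast_sub h1]
        push_cast
        ring
    have hjsne : (js : ℕ) ≠ (q₁ i0 : ℕ) := by
      by_cases h : (q₁ i0 : ℕ) = 0
      · rw [hjs]; simp only [h, dif_pos]; omega
      · rw [hjs]; simp only [h, dif_neg, not_false_iff, Fin.val_mk]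
        have h1 : 1 ≤ (q₁ i0 : ℕ) := Nat.pos_of_ne_zero h
        omega
    set qs : Fin k → Fin (m+1) := Function.update q₁ i0 js with hqs
    have hqsne : qs ≠ q₁ := by
      intro hcontra
      apply hjsne
      have : qs i0 = q₁ i0 := by rw [hcontra]
      rw [hqs, Function.update_self] at this
      rw [this]
    have hdist : dist (latPt q₁) (latPt qs) = 1 := by
      have hsq : dist (latPt q₁) (latPt qs) ^ 2 = 1 := by
        rw [dist_latPt_sq]
        rw [Finset.sum_eq_single i0]
        · rw [hqs, Function.update_self]; exact hjsval
        · intro i _ hne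
          rw [hqs, Function.update_of_ne hne]
          ring
        · intro hcontra; exact absurd (Finset.mem_univ i0) hcontra
      rw [← Real.sqrt_sq (dist_nonneg (x := latPt q₁) (y := latPt qs)), hsq, Real.sqrt_one]
    -- single term lower bound
    have hmem : qs ∈ Finset.univ.filter (fun q' => q' ≠ q₁) :=
      Finset.mem_filter.mpr ⟨Finset.mem_univ _, hqsne⟩
    have hsingle : b qs ≤ c * b q₁ ^ (p-1) := by
      rw [← hsum q₁]
      have : (1 / dist (latPt q₁) (latPt qs) ^ ((n:ℝ)-2)) * b qs = b qs := by
        rw [hdist, Real.one_rpow]; ring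
      rw [← this]
      apply Finset.single_le_sum
        (f := fun q' => (1 / dist (latPt q₁) (latPt q') ^ ((n:ℝ)-2)) * b q') _ hmem
      intro q' _
      exact mul_nonneg (hAnonneg q₁ q') (hb q').le
    have hmu : b q₁ ≤ b qs := hq₁ qs (Finset.mem_univ _)
    -- c * μ^(p-1) ≥ μ
    have h1 : b q₁ ≤ c * b q₁ ^ (p-1) := le_trans hmu hsingle
    have hsplit : b q₁ ^ (p-1) = b q₁ ^ (p-2) * b q₁ := by
      rw [show p - 1 = (p-2) + 1 by ring, Real.rpow_add hbq₁, Real.rpow_one]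
    rw [hsplit] at h1
    have h2' : 1 ≤ c * b q₁ ^ (p-2) := by
      apply le_of_mul_le_mul_right _ hbq₁
      calc 1 * b q₁ = b q₁ := one_mul _
        _ ≤ c * (b q₁ ^ (p-2) * b q₁) := h1
        _ = (c * b q₁ ^ (p-2)) * b q₁ := by ring
    have h2 : c⁻¹ ≤ b q₁ ^ (p-2) := by
      rw [← one_div, div_le_iff₀ hc]
      nlinarith [h2']
    have h3 : L ≤ b q₁ := by
      have := Real.rpow_le_rpow (by positivity) h2 he0
      rwa [← Real.rpow_mul hbq₁.le, mul_inv_cancel₀ (ne_of_gt hp2), Real.rpow_one] at this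
    have := hq₁ q (Finset.mem_univ q)
    linarith
  · -- upper bound via max
    obtain ⟨q₀, -, hq₀⟩ := Finset.exists_max_image Finset.univ b ⟨q, Finset.mem_univ q⟩
    have hbq₀ := hb q₀
    have hrow := row_bound (m := m) hnk q₀
    have h1 : c * b q₀ ^ (p-1) ≤ 16^k * b q₀ := by
      rw [← hsum q₀]
      calc ∑ q' ∈ Finset.univ.filter (fun q' => q' ≠ q₀),
            (1 / dist (latPt q₀) (latPt q') ^ ((n:ℝ)-2)) * b q'
          ≤ ∑ q' ∈ Finset.univ.filter (fun q' => q' ≠ q₀),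
            (1 / dist (latPt q₀) (latPt q') ^ ((n:ℝ)-2)) * b q₀ := by
            refine Finset.sum_le_sum fun q' _ => ?_
            exact mul_le_mul_of_nonneg_left (hq₀ q' (Finset.mem_univ _)) (hAnonneg q₀ q')
        _ = (∑ q' ∈ Finset.univ.filter (fun q' => q' ≠ q₀),
              1 / dist (latPt q₀) (latPt q') ^ ((n:ℝ)-2)) * b q₀ := by
            rw [Finset.sum_mul]
        _ ≤ 16^k * b q₀ := mul_le_mul_of_nonneg_right hrow hbq₀.le
    have hsplit : b q₀ ^ (p-1) = b q₀ ^ (p-2) * b q₀ := by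
      rw [show p - 1 = (p-2) + 1 by ring, Real.rpow_add hbq₀, Real.rpow_one]
    rw [hsplit] at h1
    have h2 : b q₀ ^ (p-2) ≤ (16:ℝ)^k / c := by
      rw [le_div_iff₀ hc]
      have h3 : c * b q₀ ^ (p-2) * b q₀ ≤ 16^k * b q₀ := by linarith [h1]
      have h4 : c * b q₀ ^ (p-2) ≤ 16^k := le_of_mul_le_mul_right h3 hbq₀
      linarith [h4]
    have h3 : b q₀ ≤ U := by
      have := Real.rpow_le_rpow (Real.rpow_nonneg hbq₀.le _) h2 he0
      rwa [← Real.rpow_mul hbq₀.le, mul_inv_cancel₀ (ne_of_gt hp2), Real.rpow_one] at this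
    have := hq₀ q (Finset.mem_univ q)
    linarith
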